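/- The additive subgroup Λ' of ℂ² generated by the four vectors u₁ = (ζ−ζ⁴, ζ²−ζ³), u₂ = (ζ²−ζ³, ζ⁴−ζ), w₁ = (1,1), w₂ = (ζ+ζ⁴, ζ²+ζ³) is contained in Λ, and Λ' has index 4 as a subgroup of Λ. -/

import Mathlib

noncomputable section

/-- The primitive fifth root of unity `ζ = exp(2πi/5)`. -/
def ζ : ℂ := Complex.exp (2 * Real.pi * Complex.I / 5)

/-- The lattice `Λ ⊆ ℂ²` generated by `(1,1)`, `(ζ,ζ²)`, `(ζ²,ζ⁴)`, `(ζ³,ζ)`. -/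
def Λ : AddSubgroup (ℂ × ℂ) :=
  AddSubgroup.closure {((1 : ℂ), (1 : ℂ)), (ζ, ζ ^ 2), (ζ ^ 2, ζ ^ 4), (ζ ^ 3, ζ)}

/-- The sublattice `Λ'` generated by `u₁ = (ζ−ζ⁴, ζ²−ζ³)`, `u₂ = (ζ²−ζ³, ζ⁴−ζ)`,
`w₁ = (1,1)`, `w₂ = (ζ+ζ⁴, ζ²+ζ³)`. -/
def Λ' : AddSubgroup (ℂ × ℂ) :=
  AddSubgroup.closure
    {(ζ - ζ ^ 4, ζ ^ 2 - ζ ^ 3), (ζ ^ 2 - ζ ^ 3, ζ ^ 4 - ζ),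
     ((1 : ℂ), (1 : ℂ)), (ζ + ζ ^ 4, ζ ^ 2 + ζ ^ 3)}

lemma hprim : IsPrimitiveRoot ζ 5 := by
  have := Complex.isPrimitiveRoot_exp 5 (by norm_num)
  simpa [ζ] using this

lemma hζ5 : ζ ^ 5 = 1 := hprim.pow_eq_one

lemma hζsum : 1 + ζ + ζ ^ 2 + ζ ^ 3 + ζ ^ 4 = 0 := by
  have h1 : ζ ≠ 1 := hprim.ne_one (by norm_num)
  have : (ζ - 1) * (1 + ζ + ζ ^ 2 + ζ ^ 3 + ζ ^ 4) = 0 := by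
    linear_combination hζ5
  rcases mul_eq_zero.1 this with h | h
  · exact absurd (sub_eq_zero.1 h) h1
  · exact h

lemma hdeg : (minpoly ℚ ζ).natDegree = 4 := by
  rw [← Polynomial.cyclotomic_eq_minpoly_rat hprim (by norm_num),
    Polynomial.natDegree_cyclotomic]
  decide

lemma hindep : ∀ a b c d : ℤ, (a : ℂ) + b * ζ + c * ζ ^ 2 + d * ζ ^ 3 = 0 →
    a = 0 ∧ b = 0 ∧ c = 0 ∧ d = 0 := by
  intro a b c d h
  have li : LinearIndependent ℚ fun i : Fin 4 => ζ ^ (i : ℕ) := by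
    have := linearIndependent_pow (K := ℚ) (S := ℂ) ζ
    rwa [hdeg] at this
  have := Fintype.linearIndependent_iff.1 li ![(a:ℚ), b, c, d] ?_
  · have h0 := this 0; have h1 := this 1; have h2 := this 2; have h3 := this 3
    simp at h0 h1 h2 h3
    exact ⟨by exact_mod_cast h0, by exact_mod_cast h1, by exact_mod_cast h2, by exact_mod_cast h3⟩
  · show ((a:ℚ)) • ζ ^ ((0:Fin 4):ℕ) + _ = _
    simp only [Fin.sum_univ_four, Rat.smul_def, Fin.isValue]
    norm_num
    linear_combination h

/-- The parametrization of `Λ` by `ℤ⁴`. -/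
def f : ℤ × ℤ × ℤ × ℤ →+ ℂ × ℂ where
  toFun x := ((x.1 : ℂ) + x.2.1 * ζ + x.2.2.1 * ζ ^ 2 + x.2.2.2 * ζ ^ 3,
              (x.1 : ℂ) + x.2.1 * ζ ^ 2 + x.2.2.1 * ζ ^ 4 + x.2.2.2 * ζ)
  map_zero' := by simp
  map_add' x y := by
    simp only [Prod.fst_add, Prod.snd_add, Prod.mk_add_mk, Prod.mk.injEq]
    push_cast
    constructor <;> ring

def g : ℤ × ℤ × ℤ × ℤ →+ ZMod 2 × ZMod 2 where
  toFun x := ((x.2.1 : ZMod 2), ((x.2.2.1 + x.2.2.2 : ℤ) : ZMod 2))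
  map_zero' := by simp
  map_add' x y := by
    simp only [Prod.fst_add, Prod.snd_add, Prod.mk_add_mk, Prod.mk.injEq]
    push_cast
    constructor <;> ring

lemma finj : Function.Injective f := by
  rw [injective_iff_map_eq_zero]
  intro x hx
  have h1 : (x.1 : ℂ) + x.2.1 * ζ + x.2.2.1 * ζ ^ 2 + x.2.2.2 * ζ ^ 3 = 0 :=
    congrArg Prod.fst hx
  obtain ⟨ha, hb, hc, hd⟩ := hindep _ _ _ _ h1
  exact Prod.ext ha (Prod.ext hb (Prod.ext hc hd))

lemma hΛ : Λ = f.range := by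
  apply le_antisymm
  · rw [Λ, AddSubgroup.closure_le]
    rintro v (rfl | rfl | rfl | rfl)
    · exact ⟨(1,0,0,0), by simp [f]⟩
    · exact ⟨(0,1,0,0), by simp [f]⟩
    · exact ⟨(0,0,1,0), by simp [f]⟩
    · exact ⟨(0,0,0,1), by simp [f]⟩
  · rintro v ⟨⟨a,b,c,d⟩, rfl⟩
    have h1 : (((1:ℂ),(1:ℂ)) : ℂ × ℂ) ∈ Λ := AddSubgroup.subset_closure (by simp)
    have h2 : ((ζ, ζ^2) : ℂ × ℂ) ∈ Λ := AddSubgroup.subset_closure (by simp)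
    have h3 : ((ζ^2, ζ^4) : ℂ × ℂ) ∈ Λ := AddSubgroup.subset_closure (by simp)
    have h4 : ((ζ^3, ζ) : ℂ × ℂ) ∈ Λ := AddSubgroup.subset_closure (by simp)
    have : f (a,b,c,d) = a • ((1:ℂ),(1:ℂ)) + b • (ζ, ζ^2) + c • (ζ^2, ζ^4) + d • (ζ^3, ζ) := by
      simp only [f, AddMonoidHom.coe_mk, ZeroHom.coe_mk, Prod.smul_def, zsmul_eq_mul,
        Prod.mk_add_mk, Prod.mk.injEq, Prod.mk_mul_mk, smul_eq_mul, mul_one]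
    rw [this]
    exact AddSubgroup.add_mem _ (AddSubgroup.add_mem _ (AddSubgroup.add_mem _
      (AddSubgroup.zsmul_mem _ h1 a) (AddSubgroup.zsmul_mem _ h2 b))
      (AddSubgroup.zsmul_mem _ h3 c)) (AddSubgroup.zsmul_mem _ h4 d)

lemma hΛ' : Λ' = AddSubgroup.map f g.ker := by
  apply le_antisymm
  · rw [Λ', AddSubgroup.closure_le]
    rintro v (rfl | rfl | rfl | rfl)
    · refine ⟨(1,2,1,1), by
        show _ ∈ g.ker
        simp only [AddMonoidHom.mem_ker, g, AddMonoidHom.coe_mk, ZeroHom.coe_mk, Prod.mk_eq_zero]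
        constructor <;> push_cast <;> decide, ?_⟩
      simp only [f, AddMonoidHom.coe_mk, ZeroHom.coe_mk]
      rw [Prod.ext_iff]
      constructor <;> · push_cast; linear_combination hζsum
    · refine ⟨(0,0,1,-1), by
        show _ ∈ g.ker
        simp only [AddMonoidHom.mem_ker, g, AddMonoidHom.coe_mk, ZeroHom.coe_mk, Prod.mk_eq_zero]
        constructor <;> push_cast <;> decide, ?_⟩
      simp only [f, AddMonoidHom.coe_mk, ZeroHom.coe_mk]
      rw [Prod.ext_iff]
      constructor <;> · push_cast; ring
    · refine ⟨(1,0,0,0), by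
        show _ ∈ g.ker
        simp only [AddMonoidHom.mem_ker, g, AddMonoidHom.coe_mk, ZeroHom.coe_mk, Prod.mk_eq_zero]
        constructor <;> push_cast <;> decide, ?_⟩
      simp only [f, AddMonoidHom.coe_mk, ZeroHom.coe_mk]
      rw [Prod.ext_iff]
      constructor <;> · push_cast; ring
    · refine ⟨(-1,0,-1,-1), by
        show _ ∈ g.ker
        simp only [AddMonoidHom.mem_ker, g, AddMonoidHom.coe_mk, ZeroHom.coe_mk, Prod.mk_eq_zero]
        constructor <;> push_cast <;> decide, ?_⟩
      simp only [f, AddMonoidHom.coe_mk, ZeroHom.coe_mk]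
      rw [Prod.ext_iff]
      constructor <;> · push_cast; linear_combination -hζsum
  · rintro v ⟨⟨a,b,c,d⟩, hk, rfl⟩
    have hm : g (a,b,c,d) = 0 := hk
    simp only [g, AddMonoidHom.coe_mk, ZeroHom.coe_mk, Prod.mk_eq_zero] at hm
    obtain ⟨b', rfl⟩ : 2 ∣ b := by
      have := hm.1
      rwa [ZMod.intCast_zmod_eq_zero_iff_dvd] at this
    obtain ⟨s, hs⟩ : 2 ∣ (c + d) := by
      have := hm.2
      rwa [ZMod.intCast_zmod_eq_zero_iff_dvd] at this
    have g1 : ((ζ - ζ^4, ζ^2 - ζ^3) : ℂ × ℂ) ∈ Λ' := AddSubgroup.subset_closure (by simp)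
    have g2 : ((ζ^2 - ζ^3, ζ^4 - ζ) : ℂ × ℂ) ∈ Λ' := AddSubgroup.subset_closure (by simp)
    have g3 : (((1:ℂ),(1:ℂ)) : ℂ × ℂ) ∈ Λ' := AddSubgroup.subset_closure (by simp)
    have g4 : ((ζ + ζ^4, ζ^2 + ζ^3) : ℂ × ℂ) ∈ Λ' := AddSubgroup.subset_closure (by simp)
    have key : f (a, 2*b', c, d) =
        b' • ((ζ - ζ^4, ζ^2 - ζ^3) : ℂ × ℂ) + (s - d) • ((ζ^2 - ζ^3, ζ^4 - ζ) : ℂ × ℂ)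
        + (a - s) • (((1:ℂ),(1:ℂ)) : ℂ × ℂ) + (b' - s) • ((ζ + ζ^4, ζ^2 + ζ^3) : ℂ × ℂ) := by
      have hsC : (c : ℂ) + d = 2 * s := by exact_mod_cast congrArg (Int.cast : ℤ → ℂ) hs
      simp [f, Prod.ext_iff, Prod.smul_def, zsmul_eq_mul]
      constructor
      · push_cast; linear_combination (ζ^2) * hsC + (s:ℂ) * hζsum
      · push_cast; linear_combination (ζ^4) * hsC + (s:ℂ) * hζsum
    rw [key]
    exact AddSubgroup.add_mem _ (AddSubgroup.add_mem _ (AddSubgroup.add_mem _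
      (AddSubgroup.zsmul_mem _ g1 b') (AddSubgroup.zsmul_mem _ g2 (s-d)))
      (AddSubgroup.zsmul_mem _ g3 (a-s))) (AddSubgroup.zsmul_mem _ g4 (b'-s))

lemma gsurj : Function.Surjective g := by
  rintro ⟨x, y⟩
  obtain ⟨b, hb⟩ := ZMod.intCast_surjective (n := 2) x
  obtain ⟨c, hc⟩ := ZMod.intCast_surjective (n := 2) y
  exact ⟨(0, b, c, 0), by simp [g, hb, hc]⟩

/-- `Λ' ⊆ Λ`, and `Λ'` has index 4 in `Λ`. -/
theorem sublattice_index_four :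
    Λ' ≤ Λ ∧ Λ'.relIndex Λ = 4 := by
  have hle : Λ' ≤ Λ := by
    rw [hΛ, hΛ']
    rintro v ⟨x, _, rfl⟩
    exact ⟨x, rfl⟩
  refine ⟨hle, ?_⟩
  have hmap : Λ = AddSubgroup.map f ⊤ := by rw [hΛ]; exact AddMonoidHom.range_eq_map f
  rw [hΛ', hmap, ← AddSubgroup.relIndex_comap,
    AddSubgroup.comap_map_eq_self_of_injective finj,
    AddSubgroup.relIndex_top_right, AddSubgroup.index_ker]
  rw [AddMonoidHom.range_eq_top.2 gsurj, AddSubgroup.card_top,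
    Nat.card_eq_fintype_card, Fintype.card_prod, ZMod.card]


end
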